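/- Let τ be a Hermitian unital linear functional on ℂ⟨x⟩ and 1 ≤ n′ < n. Then η_{orb,R}(τ) ≤ η_{orb,R}(τ restricted to ℂ⟨x_1, …, x_{n′}⟩) + η_{orb,R}(τ restricted to ℂ⟨x_{n′+1}, …, x_n⟩), where the two right-hand quantities are the orbital η-entropies of the sub-systems of variables x_1, …, x_{n′} and x_{n′+1}, …, x_n respectively, with the same cut-off R (conventions: (−∞) + a = −∞). -/

import Mathlib

/-!
Orbital free pressure and its Legendre transform (Hiai–Ueda).

Common infrastructure: the free unital complex *-algebra on self-adjoint generators,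
matrix microstate sets, the orbital free pressure, the orbital η-entropy, the orbital
free entropy; Lebesgue measure on self-adjoint matrices, the free pressure, free
entropy and η-entropy; Gibbs (micro-)ensembles.

The Haar probability measures `γ_{U(N)}` on the unitary groups are formalized as a
family of left-invariant Borel probability measures (which uniquely determines them).
-/

open MeasureTheory Filter Topology
open scoped BigOperators ENNReal TensorProduct ComplexOrder

noncomputable section

namespace OrbFP

/-- The algebra of `N × N` complex matrices. -/
abbrev Mat (N : ℕ) := Matrix (Fin N) (Fin N) ℂ

/-- The normalized trace `tr_N`. -/
def trN (N : ℕ) (A : Mat N) : ℂ := A.trace / (N : ℂ)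

/-- The (ℓ²-)operator norm of a matrix. -/
def opNorm {N : ℕ} (A : Mat N) : ℝ := ‖Matrix.toEuclideanCLM (𝕜 := ℂ) A‖

/-- The unitary group `U(N)`. -/
abbrev UN (N : ℕ) := Matrix.unitaryGroup (Fin N) ℂ

instance (N : ℕ) : MeasurableSpace (UN N) := borel _
instance (N : ℕ) : BorelSpace (UN N) := ⟨rfl⟩
instance (N : ℕ) : MeasurableSpace (Mat N) := borel _
instance (N : ℕ) : BorelSpace (Mat N) := ⟨rfl⟩

/-- The free unital complex *-algebra on self-adjoint generators indexed by `X`. -/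
abbrev FAlg (X : Type) := FreeAlgebra ℂ X

/-- Coefficient-wise complex conjugation on the free algebra. -/
def conjCoeff {X : Type} (p : FAlg X) : FAlg X :=
  (FreeAlgebra.equivMonoidAlgebraFreeMonoid (R := ℂ) (X := X)).symm
    (MonoidAlgebra.ofCoeff (Finsupp.mapRange (starRingEnd ℂ) (map_zero _)
      (FreeAlgebra.equivMonoidAlgebraFreeMonoid (R := ℂ) (X := X) p).coeff))

/-- The star operation of the free complex *-algebra with self-adjoint generators:
reverse words (the `star` of `FreeAlgebra`) and conjugate the coefficients. -/
def fstar {X : Type} (p : FAlg X) : FAlg X := star (conjCoeff p)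

/-- Self-adjointness in the free complex *-algebra. -/
def IsSA {X : Type} (p : FAlg X) : Prop := fstar p = p

/-- A Hermitian unital linear functional. -/
def IsHermState {X : Type} (τ : FAlg X →ₗ[ℂ] ℂ) : Prop :=
  τ 1 = 1 ∧ ∀ p, τ (fstar p) = starRingEnd ℂ (τ p)

/-- Ordered product of a word of matrices. -/
def wordMat {N : ℕ} {κ : Type} (A : κ → Mat N) (w : List κ) : Mat N := (w.map A).prod

/-- Ordered product of a word of generators in the free algebra. -/
def wordAlg {κ : Type} (w : List κ) : FAlg κ := (w.map (FreeAlgebra.ι ℂ)).prod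

/-- The microstate set `Γ_R(τ; N, m, δ)` of a functional on the free algebra on `κ`:
tuples of self-adjoint matrices of operator norm at most `R` whose normalized trace of
every word of length `1 ≤ l ≤ m` is `δ`-close to the corresponding moment of `τ`. -/
def microSet {κ : Type} (R : ℝ) (τ : FAlg κ →ₗ[ℂ] ℂ) (N m : ℕ) (δ : ℝ) :
    Set (κ → Mat N) :=
  {A | (∀ j, (A j).IsHermitian ∧ opNorm (A j) ≤ R) ∧
    ∀ w : List κ, w ≠ [] → w.length ≤ m →
      ‖trN N (wordMat A w) - τ (wordAlg w)‖ < δ}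

/-- `τ` has finite-dimensional approximants. -/
def HasFDA {κ : Type} (R : ℝ) (τ : FAlg κ →ₗ[ℂ] ℂ) : Prop :=
  ∀ (m : ℕ) (δ : ℝ), 0 < δ → ∃ N, (microSet R τ N m δ).Nonempty

variable {ι : Type} [Fintype ι]

/-- The index of the generators `x_{ij}`, `i ∈ ι`, `1 ≤ j ≤ r i`. -/
abbrev gen (r : ι → ℕ) := Σ i : ι, Fin (r i)

/-- Evaluation of the full free algebra at a family of matrix tuples. -/
def evalA {r : ι → ℕ} {N : ℕ} (A : ∀ i, Fin (r i) → Mat N) :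
    FAlg (gen r) →ₐ[ℂ] Mat N :=
  FreeAlgebra.lift ℂ fun p : gen r => A p.1 p.2

/-- The canonical embedding `ℂ⟨x_i⟩ → ℂ⟨x⟩`. -/
def inclAlg (r : ι → ℕ) (i : ι) : FAlg (Fin (r i)) →ₐ[ℂ] FAlg (gen r) :=
  FreeAlgebra.lift ℂ fun j => FreeAlgebra.ι ℂ (⟨i, j⟩ : gen r)

/-- The restriction of a functional on `ℂ⟨x⟩` to `ℂ⟨x_i⟩`. -/
def restr {r : ι → ℕ} (τ : FAlg (gen r) →ₗ[ℂ] ℂ) (i : ι) :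
    FAlg (Fin (r i)) →ₗ[ℂ] ℂ :=
  τ ∘ₗ (inclAlg r i).toLinearMap

/-- The embedding of the free algebra of a sub-system of the variables. -/
def inclSub {r : ι → ℕ} (P : ι → Prop) :
    FAlg (gen fun i : Subtype P => r i.1) →ₐ[ℂ] FAlg (gen r) :=
  FreeAlgebra.lift ℂ fun p => FreeAlgebra.ι ℂ (⟨p.1.1, p.2⟩ : gen r)

/-- Restriction of a functional to a sub-system of the variables. -/
def restrSub {r : ι → ℕ} (P : ι → Prop) (τ : FAlg (gen r) →ₗ[ℂ] ℂ) :
    FAlg (gen fun i : Subtype P => r i.1) →ₗ[ℂ] ℂ :=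
  τ ∘ₗ (inclSub P).toLinearMap

/-- The conjugated family `(V_i A_i V_i^*)_i`. -/
def conjFam {r : ι → ℕ} {N : ℕ} (V : ι → UN N) (A : ∀ i, Fin (r i) → Mat N) :
    ∀ i, Fin (r i) → Mat N :=
  fun i j => (V i : Mat N) * A i j * star (V i : Mat N)

/-- The Gibbs weight `exp(-N² tr_N(h((V_i A_i V_i^*)_i)))`. -/
def gibbsWt {r : ι → ℕ} {N : ℕ} (h : FAlg (gen r)) (A : ∀ i, Fin (r i) → Mat N)
    (V : ι → UN N) : ℝ :=
  Real.exp (-(N : ℝ) ^ 2 * (trN N (evalA (conjFam V A) h)).re)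

/-- The product `∏_i Γ_R(τ_i; N, m, δ)` of the microstate sets. -/
def microProd (R : ℝ) {r : ι → ℕ} (τs : ∀ i, FAlg (Fin (r i)) →ₗ[ℂ] ℂ)
    (N m : ℕ) (δ : ℝ) : Set (∀ i, Fin (r i) → Mat N) :=
  {A | ∀ i, A i ∈ microSet R (τs i) N m δ}

/-- The finite-`N` orbital free pressure `π_{orb,R}(h : (τ_i); N, m, δ)`
(`-∞` when some microstate set is empty). -/
def piOrbN (γ : ∀ N, Measure (UN N)) (R : ℝ) {r : ι → ℕ} (h : FAlg (gen r))
    (τs : ∀ i, FAlg (Fin (r i)) →ₗ[ℂ] ℂ) (N m : ℕ) (δ : ℝ) : EReal :=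
  ⨆ A ∈ microProd R τs N m δ,
    ((Real.log (∫ V : ι → UN N, gibbsWt h A V ∂(Measure.pi fun _ => γ N)) : ℝ) : EReal)

/-- The orbital free pressure `π_{orb,R}(h : (τ_i))`. -/
def piOrb (γ : ∀ N, Measure (UN N)) (R : ℝ) {r : ι → ℕ} (h : FAlg (gen r))
    (τs : ∀ i, FAlg (Fin (r i)) →ₗ[ℂ] ℂ) : EReal :=
  ⨅ (m : ℕ) (δ : ℝ) (_ : 0 < δ),
    Filter.limsup
      (fun N : ℕ => ((((N : ℝ) ^ 2)⁻¹ : ℝ) : EReal) * piOrbN γ R h τs N m δ)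
      Filter.atTop

/-- The "universal" `R`-norm `‖h‖_R`: the supremum of the operator norms of all
evaluations of `h` at families of self-adjoint matrices of norm at most `R`. -/
def normR (R : ℝ) {r : ι → ℕ} (h : FAlg (gen r)) : ℝ :=
  sSup {t : ℝ | ∃ (N : ℕ) (A : ∀ i, Fin (r i) → Mat N),
    (∀ i j, (A i j).IsHermitian ∧ opNorm (A i j) ≤ R) ∧ t = opNorm (evalA A h)}

/-- The minus Legendre transform `inf_h (φ(h) + π_{orb,R}(h : (τ_i)))` of the orbital
free pressure, relative to `(τ_i)`. -/
def etaOrbRel (γ : ∀ N, Measure (UN N)) (R : ℝ) {r : ι → ℕ}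
    (τ : FAlg (gen r) →ₗ[ℂ] ℂ) (τs : ∀ i, FAlg (Fin (r i)) →ₗ[ℂ] ℂ) : EReal :=
  ⨅ (h : FAlg (gen r)) (_ : IsSA h),
    (((τ h).re : ℝ) : EReal) + piOrb γ R h τs

/-- The orbital `η`-entropy `η_{orb,R}(τ)`. -/
def etaOrb (γ : ∀ N, Measure (UN N)) (R : ℝ) {r : ι → ℕ}
    (τ : FAlg (gen r) →ₗ[ℂ] ℂ) : EReal :=
  etaOrbRel γ R τ (restr τ)

/-- The microstate set `Γ_R(τ; N, m, δ)` of a functional on the full free algebra. -/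
def microFull (R : ℝ) {r : ι → ℕ} (τ : FAlg (gen r) →ₗ[ℂ] ℂ) (N m : ℕ) (δ : ℝ) :
    Set (∀ i, Fin (r i) → Mat N) :=
  {A | (∀ i j, (A i j).IsHermitian ∧ opNorm (A i j) ≤ R) ∧
    ∀ w : List (gen r), w ≠ [] → w.length ≤ m →
      ‖trN N (wordMat (fun p : gen r => A p.1 p.2) w) - τ (wordAlg w)‖ < δ}

/-- `τ` (on the full algebra) has finite-dimensional approximants. -/
def HasFDAFull (R : ℝ) {r : ι → ℕ} (τ : FAlg (gen r) →ₗ[ℂ] ℂ) : Prop :=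
  ∀ (m : ℕ) (δ : ℝ), 0 < δ → ∃ N, (microFull R τ N m δ).Nonempty

/-- The orbital microstate set `Γ_orb(τ : (A_i); N, m, δ)`. -/
def orbSet (R : ℝ) {r : ι → ℕ} (τ : FAlg (gen r) →ₗ[ℂ] ℂ) {N : ℕ}
    (A : ∀ i, Fin (r i) → Mat N) (m : ℕ) (δ : ℝ) : Set (ι → UN N) :=
  {V | conjFam V A ∈ microFull R τ N m δ}

/-- The orbital free entropy `χ_{orb,R}(τ)`. -/
def chiOrb (γ : ∀ N, Measure (UN N)) (R : ℝ) {r : ι → ℕ}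
    (τ : FAlg (gen r) →ₗ[ℂ] ℂ) : EReal :=
  ⨅ (m : ℕ) (δ : ℝ) (_ : 0 < δ),
    Filter.limsup
      (fun N : ℕ => ((((N : ℝ) ^ 2)⁻¹ : ℝ) : EReal) *
        ⨆ A ∈ microProd R (restr τ) N m δ,
          ENNReal.log ((Measure.pi fun _ : ι => γ N) (orbSet R τ A m δ)))
      Filter.atTop

/-- A tracial `R₀`-state on `ℂ⟨x⟩`. -/
def IsTracialRState {r : ι → ℕ} (R₀ : ℝ) (τ : FAlg (gen r) →ₗ[ℂ] ℂ) : Prop :=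
  IsHermState τ ∧ (∀ p q, τ (p * q) = τ (q * p)) ∧
  (∀ p, 0 ≤ (τ (fstar p * p)).re) ∧
  ∀ (i : ι) (j : Fin (r i)) (k : ℕ) (p : FAlg (gen r)),
    (τ (fstar p * FreeAlgebra.ι ℂ (⟨i, j⟩ : gen r) ^ (2 * k) * p)).re
      ≤ R₀ ^ (2 * k) * (τ (fstar p * p)).re

/-- `τ` is the free product of its restrictions `τ_i`: alternating words in the
`τ`-centered subalgebras `ℂ⟨x_i⟩` have vanishing `τ`-value. -/
def IsFreeProduct {r : ι → ℕ} (τ : FAlg (gen r) →ₗ[ℂ] ℂ) : Prop :=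
  ∀ (k : ℕ), 0 < k → ∀ (idx : Fin k → ι) (p : ∀ l, FAlg (Fin (r (idx l)))),
    (∀ l, τ (inclAlg r (idx l) (p l)) = 0) →
    (∀ (l : Fin k) (hl : (l : ℕ) + 1 < k), idx l ≠ idx ⟨(l : ℕ) + 1, hl⟩) →
    τ ((List.ofFn fun l => inclAlg r (idx l) (p l)).prod) = 0

/-- The partition function `Z_N^{(h, Ξ(N))}` of the orbital Gibbs micro-ensemble. -/
def ZOrbN (γ : ∀ N, Measure (UN N)) {r : ι → ℕ} (h : FAlg (gen r)) {N : ℕ}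
    (A : ∀ i, Fin (r i) → Mat N) : ℝ :=
  ∫ V : ι → UN N, gibbsWt h A V ∂(Measure.pi fun _ => γ N)

/-- The orbital Gibbs micro-ensemble `μ_N^{(h, Ξ(N))}`. -/
def muOrbN (γ : ∀ N, Measure (UN N)) {r : ι → ℕ} (h : FAlg (gen r)) {N : ℕ}
    (A : ∀ i, Fin (r i) → Mat N) : Measure (ι → UN N) :=
  (Measure.pi fun _ => γ N).withDensity
    fun V => ENNReal.ofReal (gibbsWt h A V / ZOrbN γ h A)

/-! ### Lebesgue measure on self-adjoint matrices and one-variable quantities -/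

/-- The parametrization of self-adjoint matrices by the diagonal entries and the real
and imaginary parts of the above-diagonal entries. -/
def matOfCoord (N : ℕ) (f : Fin N × Fin N → ℝ) : Mat N :=
  Matrix.of fun p q =>
    if p = q then (f (p, p) : ℂ)
    else if p < q then (f (p, q) : ℂ) + (f (q, p) : ℂ) * Complex.I
    else (f (q, p) : ℂ) - (f (p, q) : ℂ) * Complex.I

/-- The Lebesgue measure `Λ_N` on self-adjoint `N × N` matrices. -/
def LambdaMat (N : ℕ) : Measure (Mat N) :=
  Measure.map (matOfCoord N) (volume : Measure (Fin N × Fin N → ℝ))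

/-- The product Lebesgue measure `Λ_N^{⊗n}` on `n`-tuples of self-adjoint matrices. -/
def LambdaPow (n N : ℕ) : Measure (Fin n → Mat N) :=
  Measure.map (fun f i => matOfCoord N (f i))
    (volume : Measure (Fin n → Fin N × Fin N → ℝ))

/-- Evaluation of a polynomial in `n` single variables at an `n`-tuple of matrices. -/
def evalSingle {n : ℕ} {N : ℕ} (A : Fin n → Mat N) :
    FAlg (gen fun _ : Fin n => 1) →ₐ[ℂ] Mat N :=
  evalA fun i (_ : Fin 1) => A i

/-- The set `((M_N(ℂ)^{sa})_R)^n`. -/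
def ballR (n N : ℕ) (R : ℝ) : Set (Fin n → Mat N) :=
  {A | ∀ i, (A i).IsHermitian ∧ opNorm (A i) ≤ R}

/-- The partition function `Z_{R,N}^h`. -/
def ZR (n N : ℕ) (R : ℝ) (h : FAlg (gen fun _ : Fin n => 1)) : ℝ :=
  ∫ A in ballR n N R,
    Real.exp (-(N : ℝ) ^ 2 * (trN N (evalSingle A h)).re) ∂(LambdaPow n N)

/-- The free pressure `π_R(h)`. -/
def piR (n : ℕ) (R : ℝ) (h : FAlg (gen fun _ : Fin n => 1)) : EReal :=
  Filter.limsup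
    (fun N : ℕ => ((((N : ℝ) ^ 2)⁻¹ : ℝ) : EReal) * ((Real.log (ZR n N R h) : ℝ) : EReal)
      + ((((n : ℝ) / 2 * Real.log N) : ℝ) : EReal))
    Filter.atTop

/-- The Gibbs micro-ensemble `λ_{R,N}^h`. -/
def lambdaGibbs (n N : ℕ) (R : ℝ) (h : FAlg (gen fun _ : Fin n => 1)) :
    Measure (Fin n → Mat N) :=
  ((LambdaPow n N).restrict (ballR n N R)).withDensity
    fun A => ENNReal.ofReal
      (Real.exp (-(N : ℝ) ^ 2 * (trN N (evalSingle A h)).re) / ZR n N R h)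

/-- The microstate free entropy `χ_R` of a single-variable functional. -/
def chiR1 (R : ℝ) (τ : FAlg (Fin 1) →ₗ[ℂ] ℂ) : EReal :=
  ⨅ (m : ℕ) (δ : ℝ) (_ : 0 < δ),
    Filter.limsup
      (fun N : ℕ => ((((N : ℝ) ^ 2)⁻¹ : ℝ) : EReal) *
          ENNReal.log (LambdaMat N {B : Mat N | (fun _ : Fin 1 => B) ∈ microSet R τ N m δ})
        + ((((1 : ℝ) / 2 * Real.log N) : ℝ) : EReal))
      Filter.atTop

/-- The microstate free entropy `χ_R` of a functional on `n` single variables. -/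
def chiRn (n : ℕ) (R : ℝ) (σ : FAlg (gen fun _ : Fin n => 1) →ₗ[ℂ] ℂ) : EReal :=
  ⨅ (m : ℕ) (δ : ℝ) (_ : 0 < δ),
    Filter.limsup
      (fun N : ℕ => ((((N : ℝ) ^ 2)⁻¹ : ℝ) : EReal) *
          ENNReal.log (LambdaPow n N
            {A : Fin n → Mat N | (fun i (_ : Fin 1) => A i) ∈ microFull R σ N m δ})
        + ((((n : ℝ) / 2 * Real.log N) : ℝ) : EReal))
      Filter.atTop

/-- The `η`-entropy `η_R(τ)`, the minus Legendre transform of the free pressure. -/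
def etaR (n : ℕ) (R : ℝ) (τ : FAlg (gen fun _ : Fin n => 1) →ₗ[ℂ] ℂ) : EReal :=
  ⨅ (h : FAlg (gen fun _ : Fin n => 1)) (_ : IsSA h),
    (((τ h).re : ℝ) : EReal) + piR n R h

/-! ### The doubled (tensor) orbital free pressure -/

/-- The algebraic tensor product `ℂ⟨x⟩ ⊗ ℂ⟨x⟩`. -/
abbrev TAlg (r : ι → ℕ) := TensorProduct ℂ (FAlg (gen r)) (FAlg (gen r))

/-- The functional `τ ⊗ τ` on `ℂ⟨x⟩ ⊗ ℂ⟨x⟩`. -/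
def tensFun {r : ι → ℕ} (τ : FAlg (gen r) →ₗ[ℂ] ℂ) : TAlg r →ₗ[ℂ] ℂ :=
  (TensorProduct.lid ℂ ℂ).toLinearMap ∘ₗ TensorProduct.map τ τ

/-- The normalized trace as a linear map. -/
def trLin (N : ℕ) : Mat N →ₗ[ℂ] ℂ := (N : ℂ)⁻¹ • Matrix.traceLinearMap (Fin N) ℂ ℂ

/-- The functional `tr_N ⊗ tr_N` on `M_N(ℂ) ⊗ M_N(ℂ)`. -/
def tr2 (N : ℕ) : TensorProduct ℂ (Mat N) (Mat N) →ₗ[ℂ] ℂ :=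
  (TensorProduct.lid ℂ ℂ).toLinearMap ∘ₗ TensorProduct.map (trLin N) (trLin N)

/-- Evaluation of `ℂ⟨x⟩ ⊗ ℂ⟨x⟩` at a family of matrix tuples. -/
def evalT {r : ι → ℕ} {N : ℕ} (A : ∀ i, Fin (r i) → Mat N) :
    TAlg r →ₐ[ℂ] TensorProduct ℂ (Mat N) (Mat N) :=
  Algebra.TensorProduct.map (evalA A) (evalA A)

/-- The finite-`N` doubled orbital free pressure `π^{(2)}_{orb,R}(p : (τ_i); N, m, δ)`. -/
def pi2OrbN (γ : ∀ N, Measure (UN N)) (R : ℝ) {r : ι → ℕ} (p : TAlg r)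
    (τs : ∀ i, FAlg (Fin (r i)) →ₗ[ℂ] ℂ) (N m : ℕ) (δ : ℝ) : EReal :=
  ⨆ A ∈ microProd R τs N m δ,
    ((Real.log (∫ V : ι → UN N,
        Real.exp (-(N : ℝ) ^ 2 * (tr2 N (evalT (conjFam V A) p)).re)
        ∂(Measure.pi fun _ => γ N)) : ℝ) : EReal)

/-- The doubled orbital free pressure `π^{(2)}_{orb,R}(p : (τ_i))`. -/
def pi2Orb (γ : ∀ N, Measure (UN N)) (R : ℝ) {r : ι → ℕ} (p : TAlg r)
    (τs : ∀ i, FAlg (Fin (r i)) →ₗ[ℂ] ℂ) : EReal :=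
  ⨅ (m : ℕ) (δ : ℝ) (_ : 0 < δ),
    Filter.limsup
      (fun N : ℕ => ((((N : ℝ) ^ 2)⁻¹ : ℝ) : EReal) * pi2OrbN γ R p τs N m δ)
      Filter.atTop


/-! ### Auxiliary lemmas -/

section Aux

lemma ereal_distrib (c : ℝ) (hc : 0 ≤ c) {x y : EReal} (hx : x ≠ ⊤) (hy : y ≠ ⊤) :
    (c : EReal) * (x + y) = (c : EReal) * x + (c : EReal) * y := by
  rcases eq_or_lt_of_le hc with rfl | hc
  · simp only [EReal.coe_zero, zero_mul, add_zero]
  · induction x using EReal.rec with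
    | bot =>
        rw [EReal.bot_add, EReal.coe_mul_bot_of_pos hc, EReal.bot_add]
    | top => exact absurd rfl hx
    | coe x =>
        induction y using EReal.rec with
        | bot =>
            rw [EReal.add_bot, EReal.coe_mul_bot_of_pos hc, EReal.add_bot]
        | top => exact absurd rfl hy
        | coe y =>
            rw [← EReal.coe_add, ← EReal.coe_mul, ← EReal.coe_mul, ← EReal.coe_mul,
              ← EReal.coe_add, mul_add]

lemma ereal_le_iInf_add_coe {β : Type*} (c : ℝ) (b : β → EReal) (x : EReal)
    (h : ∀ j, x ≤ b j + (c : EReal)) : x ≤ (⨅ j, b j) + (c : EReal) := by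
  rw [← EReal.sub_le_iff_le_add (Or.inl (EReal.coe_ne_bot c)) (Or.inl (EReal.coe_ne_top c))]
  refine le_iInf fun j => ?_
  rw [EReal.sub_le_iff_le_add (Or.inl (EReal.coe_ne_bot c)) (Or.inl (EReal.coe_ne_top c))]
  exact h j

lemma ereal_le_add_iInf {α β : Type*} [Nonempty α] [Nonempty β]
    (a : α → EReal) (b : β → EReal) (ha : ∀ i, a i ≠ ⊤) (hb : ∀ j, b j ≠ ⊤)
    {x : EReal} (h : ∀ i j, x ≤ a i + b j) : x ≤ (⨅ i, a i) + ⨅ j, b j := by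
  obtain ⟨j₀⟩ := (inferInstance : Nonempty β)
  have step1 : ∀ i, x ≤ a i + ⨅ j, b j := by
    intro i
    cases hai : a i with
    | top => exact absurd hai (ha i)
    | bot =>
        have := h i j₀
        rw [hai, EReal.bot_add] at this
        exact this.trans bot_le
    | coe t =>
        rw [add_comm]
        refine ereal_le_iInf_add_coe t b x fun j => ?_
        have := h i j
        rw [hai, add_comm] at this
        exact this
  have hB : (⨅ j, b j) ≠ ⊤ := by
    intro hB
    exact hb j₀ (top_le_iff.1 (hB ▸ iInf_le b j₀))
  cases hBv : (⨅ j, b j) with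
  | top => exact absurd hBv hB
  | bot =>
      obtain ⟨i₀⟩ := (inferInstance : Nonempty α)
      have := step1 i₀
      rw [hBv, EReal.add_bot] at this
      exact this.trans bot_le
  | coe s =>
      refine ereal_le_iInf_add_coe s a x fun i => ?_
      have := step1 i
      rw [hBv] at this
      exact this

lemma ereal_iInf_sigma {f : ℕ → ℝ → EReal} :
    (⨅ (m : ℕ) (δ : ℝ) (_ : 0 < δ), f m δ) =
      ⨅ q : {q : ℕ × ℝ // 0 < q.2}, f q.1.1 q.1.2 := by
  apply le_antisymm
  · exact le_iInf fun q => iInf_le_of_le q.1.1 (iInf_le_of_le q.1.2 (iInf_le _ q.2))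
  · exact le_iInf fun m => le_iInf fun δ => le_iInf fun hδ =>
      iInf_le (fun q : {q : ℕ × ℝ // 0 < q.2} => f q.1.1 q.1.2) ⟨(m, δ), hδ⟩

/-! ### `fstar` and generator-to-generator maps -/

/-- The algebra map induced by a map of generators. -/
def genMap {X Y : Type} (g : X → Y) : FAlg X →ₐ[ℂ] FAlg Y :=
  FreeAlgebra.lift ℂ fun x => FreeAlgebra.ι ℂ (g x)

@[simp] lemma genMap_ι {X Y : Type} (g : X → Y) (x : X) :
    genMap g (FreeAlgebra.ι ℂ x) = FreeAlgebra.ι ℂ (g x) :=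
  FreeAlgebra.lift_ι_apply _ _

lemma star_genMap {X Y : Type} (g : X → Y) (p : FAlg X) :
    star (genMap g p) = genMap g (star p) := by
  induction p using FreeAlgebra.induction with
  | grade0 r => rw [AlgHom.commutes, FreeAlgebra.star_algebraMap,
      FreeAlgebra.star_algebraMap, AlgHom.commutes]
  | grade1 x => rw [genMap_ι, FreeAlgebra.star_ι, FreeAlgebra.star_ι, genMap_ι]
  | mul a b ha hb => rw [map_mul, star_mul, star_mul, ha, hb, map_mul]
  | add a b ha hb => rw [map_add, star_add, star_add, ha, hb, map_add]

lemma equiv_genMap {X Y : Type} (g : X → Y) (p : FAlg X) :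
    (FreeAlgebra.equivMonoidAlgebraFreeMonoid (genMap g p)).coeff =
      Finsupp.mapDomain (FreeMonoid.map g)
        (FreeAlgebra.equivMonoidAlgebraFreeMonoid (R := ℂ) (X := X) p).coeff := by
  have key : (FreeAlgebra.equivMonoidAlgebraFreeMonoid (R := ℂ) (X := Y)).toAlgHom.comp
        (genMap g) =
      (MonoidAlgebra.mapDomainAlgHom ℂ ℂ (FreeMonoid.map g)).comp
        (FreeAlgebra.equivMonoidAlgebraFreeMonoid (R := ℂ) (X := X)).toAlgHom := by
    apply FreeAlgebra.hom_ext
    funext x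
    simp [genMap, FreeAlgebra.equivMonoidAlgebraFreeMonoid, FreeAlgebra.lift_ι_apply]
  have := congrArg (fun F => F p) (congrArg (fun (F : _ →ₐ[ℂ] _) => (F : FAlg X → _)) key)
  simp at this
  rw [this]
  rfl

lemma conjCoeff_genMap {X Y : Type} (g : X → Y) (p : FAlg X) :
    conjCoeff (genMap g p) = genMap g (conjCoeff p) := by
  unfold conjCoeff
  rw [equiv_genMap,
    ← Finsupp.mapDomain_mapRange _ _ _ _ (fun x y => map_add (starRingEnd ℂ) x y)]
  set w := Finsupp.mapRange (starRingEnd ℂ) (map_zero _)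
      (FreeAlgebra.equivMonoidAlgebraFreeMonoid (R := ℂ) (X := X) p).coeff with hw
  have : Finsupp.mapDomain (FreeMonoid.map g) w =
      (FreeAlgebra.equivMonoidAlgebraFreeMonoid
        (genMap g ((FreeAlgebra.equivMonoidAlgebraFreeMonoid (R := ℂ) (X := X)).symm
          (MonoidAlgebra.ofCoeff w)))).coeff := by
    rw [equiv_genMap, AlgEquiv.apply_symm_apply, MonoidAlgebra.coeff_ofCoeff]
  rw [this, MonoidAlgebra.ofCoeff_coeff, AlgEquiv.symm_apply_apply]

lemma fstar_genMap {X Y : Type} (g : X → Y) (p : FAlg X) :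
    fstar (genMap g p) = genMap g (fstar p) := by
  unfold fstar
  rw [conjCoeff_genMap, star_genMap]

lemma conjCoeff_add {X : Type} (p q : FAlg X) :
    conjCoeff (p + q) = conjCoeff p + conjCoeff q := by
  unfold conjCoeff
  rw [map_add, MonoidAlgebra.coeff_add, Finsupp.mapRange_add (fun x y => map_add (starRingEnd ℂ) x y),
    MonoidAlgebra.ofCoeff_add, map_add]

lemma fstar_add {X : Type} (p q : FAlg X) : fstar (p + q) = fstar p + fstar q := by
  unfold fstar
  rw [conjCoeff_add, star_add]

lemma isSA_zero {X : Type} : IsSA (0 : FAlg X) := by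
  unfold IsSA fstar conjCoeff
  rw [map_zero, MonoidAlgebra.coeff_zero, Finsupp.mapRange_zero, MonoidAlgebra.ofCoeff_zero,
    map_zero, star_zero]

end Aux


section Aux2

instance (N : ℕ) : SecondCountableTopology (Mat N) :=
  inferInstanceAs (SecondCountableTopology (Fin N → Fin N → ℂ))

instance (N : ℕ) : SecondCountableTopology (UN N) :=
  inferInstanceAs (SecondCountableTopology ((Matrix.unitaryGroup (Fin N) ℂ : Set (Mat N)) : Type))

/-! ### Operator norm estimates -/

lemma opNorm_entry_le {N : ℕ} (M : Mat N) (i : Fin N) : ‖M i i‖ ≤ opNorm M := by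
  classical
  set u : EuclideanSpace ℂ (Fin N) := EuclideanSpace.single i (1 : ℂ) with hu
  have h1 : (Matrix.toEuclideanCLM (𝕜 := ℂ) M) u =
      WithLp.toLp 2 (M.mulVec (Pi.single i 1)) := by
    rw [hu]
    rfl
  have h2 : ((Matrix.toEuclideanCLM (𝕜 := ℂ) M) u) i = M i i := by
    rw [h1]
    simp [Matrix.mulVec_single]
  have h3 : (inner ℂ u ((Matrix.toEuclideanCLM (𝕜 := ℂ) M) u) : ℂ) = M i i := by
    rw [hu, EuclideanSpace.inner_single_left]
    simp [← hu, h2]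
  calc ‖M i i‖ = ‖(inner ℂ u ((Matrix.toEuclideanCLM (𝕜 := ℂ) M) u) : ℂ)‖ := by
        rw [h3]
    _ ≤ ‖u‖ * ‖(Matrix.toEuclideanCLM (𝕜 := ℂ) M) u‖ := norm_inner_le_norm _ _
    _ ≤ ‖u‖ * (opNorm M * ‖u‖) := by
        refine mul_le_mul_of_nonneg_left ?_ (norm_nonneg _)
        exact ContinuousLinearMap.le_opNorm _ _
    _ ≤ opNorm M := by
        have hnu : ‖u‖ = 1 := by rw [hu, EuclideanSpace.norm_single]; simp
        rw [hnu]; simp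

lemma trN_abs_le {N : ℕ} (M : Mat N) : ‖trN N M‖ ≤ opNorm M := by
  rcases Nat.eq_zero_or_pos N with hN | hN
  · subst hN
    have : trN 0 M = 0 := by simp [trN]
    rw [this, norm_zero]
    exact norm_nonneg _
  · have habs : ‖M.trace‖ ≤ (N : ℝ) * opNorm M := by
      calc ‖M.trace‖ ≤ ∑ i : Fin N, ‖M i i‖ := by
            exact norm_sum_le _ _
        _ ≤ ∑ _i : Fin N, opNorm M := Finset.sum_le_sum fun i _ => opNorm_entry_le M i
        _ = (N : ℝ) * opNorm M := by simp [Finset.sum_const, mul_comm]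
    have : ‖trN N M‖ = ‖M.trace‖ / (N : ℝ) := by
      unfold trN
      rw [norm_div]
      simp
    rw [this, div_le_iff₀ (by exact_mod_cast hN)]
    calc ‖M.trace‖ ≤ (N : ℝ) * opNorm M := habs
      _ = opNorm M * (N : ℝ) := mul_comm _ _

lemma opNorm_conj_le {N : ℕ} (U : UN N) (M : Mat N) :
    opNorm ((U : Mat N) * M * star (U : Mat N)) ≤ opNorm M := by
  set u := Matrix.toEuclideanCLM (𝕜 := ℂ) (U : Mat N) with hu
  have hU := U.2
  rw [Unitary.mem_iff] at hU
  have hmem : u ∈ unitary (EuclideanSpace ℂ (Fin N) →L[ℂ] EuclideanSpace ℂ (Fin N)) := by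
    rw [Unitary.mem_iff]
    constructor
    · rw [hu, ← map_star, ← map_mul, hU.1, map_one]
    · rw [hu, ← map_star, ← map_mul, hU.2, map_one]
  have : opNorm ((U : Mat N) * M * star (U : Mat N)) =
      ‖u * Matrix.toEuclideanCLM (𝕜 := ℂ) M * star u‖ := by
    rw [opNorm, map_mul, map_mul, map_star, hu]
  rw [this, CStarRing.norm_mul_mem_unitary _ (Unitary.star_mem hmem),
    CStarRing.norm_mem_unitary_mul _ hmem]
  exact le_of_eq rfl

@[simp] lemma evalA_ι {ι : Type} [Fintype ι] {r : ι → ℕ} {N : ℕ}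
    (B : ∀ i, Fin (r i) → Mat N) (x : gen r) :
    evalA B (FreeAlgebra.ι ℂ x) = B x.1 x.2 :=
  FreeAlgebra.lift_ι_apply _ _

lemma eval_bound {ι : Type} [Fintype ι] {r : ι → ℕ} {R : ℝ} (hR : 0 ≤ R) (h : FAlg (gen r)) :
    ∃ C : ℝ, 0 ≤ C ∧ ∀ (N : ℕ) (B : ∀ i, Fin (r i) → Mat N),
      (∀ i j, opNorm (B i j) ≤ R) → opNorm (evalA B h) ≤ C := by
  induction h using FreeAlgebra.induction with
  | grade0 c =>
      refine ⟨‖c‖, norm_nonneg c, fun N B _ => ?_⟩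
      rw [AlgHom.commutes]
      have h1 : algebraMap ℂ (Mat N) c = c • (1 : Mat N) := Algebra.algebraMap_eq_smul_one c
      have h2 : opNorm (c • (1 : Mat N)) =
          ‖c • (1 : EuclideanSpace ℂ (Fin N) →L[ℂ] EuclideanSpace ℂ (Fin N))‖ := by
        rw [opNorm]
        exact congrArg norm ((map_smul _ c _).trans (by rw [map_one]))
      rw [h1, h2]
      calc ‖c • (1 : EuclideanSpace ℂ (Fin N) →L[ℂ] EuclideanSpace ℂ (Fin N))‖
          = ‖c‖ * ‖(1 : EuclideanSpace ℂ (Fin N) →L[ℂ] EuclideanSpace ℂ (Fin N))‖ :=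
            norm_smul c (1 : EuclideanSpace ℂ (Fin N) →L[ℂ] EuclideanSpace ℂ (Fin N))
        _ ≤ ‖c‖ * 1 := by
            refine mul_le_mul_of_nonneg_left ?_ (norm_nonneg _)
            rw [ContinuousLinearMap.one_def]
            exact ContinuousLinearMap.norm_id_le
        _ = ‖c‖ := mul_one _
  | grade1 x =>
      exact ⟨R, hR, fun N B hB => by rw [evalA_ι]; exact hB x.1 x.2⟩
  | mul a b ha hb =>
      obtain ⟨C₁, hC₁, hb₁⟩ := ha
      obtain ⟨C₂, hC₂, hb₂⟩ := hb
      refine ⟨C₁ * C₂, mul_nonneg hC₁ hC₂, fun N B hB => ?_⟩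
      rw [map_mul, opNorm, map_mul]
      calc ‖Matrix.toEuclideanCLM (𝕜 := ℂ) (evalA B a) *
            Matrix.toEuclideanCLM (𝕜 := ℂ) (evalA B b)‖
          ≤ opNorm (evalA B a) * opNorm (evalA B b) := norm_mul_le _ _
        _ ≤ C₁ * C₂ := mul_le_mul (hb₁ N B hB) (hb₂ N B hB) (norm_nonneg _) hC₁
  | add a b ha hb =>
      obtain ⟨C₁, hC₁, hb₁⟩ := ha
      obtain ⟨C₂, hC₂, hb₂⟩ := hb
      refine ⟨C₁ + C₂, add_nonneg hC₁ hC₂, fun N B hB => ?_⟩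
      rw [map_add, opNorm, map_add]
      calc ‖Matrix.toEuclideanCLM (𝕜 := ℂ) (evalA B a) +
            Matrix.toEuclideanCLM (𝕜 := ℂ) (evalA B b)‖
          ≤ opNorm (evalA B a) + opNorm (evalA B b) := norm_add_le _ _
        _ ≤ C₁ + C₂ := add_le_add (hb₁ N B hB) (hb₂ N B hB)

lemma conjFam_opNorm_le {ι : Type} [Fintype ι] {r : ι → ℕ} {N : ℕ} {R : ℝ}
    (V : ι → UN N) (A : ∀ i, Fin (r i) → Mat N) (hA : ∀ i j, opNorm (A i j) ≤ R) :
    ∀ i j, opNorm (conjFam V A i j) ≤ R :=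
  fun i j => (opNorm_conj_le (V i) (A i j)).trans (hA i j)

/-! ### Continuity and integrability of the Gibbs weight -/

lemma eval_continuous {ι : Type} [Fintype ι] {r : ι → ℕ} {N : ℕ}
    (A : ∀ i, Fin (r i) → Mat N) (h : FAlg (gen r)) :
    Continuous fun V : ι → UN N => evalA (conjFam V A) h := by
  induction h using FreeAlgebra.induction with
  | grade0 c =>
      simp only [AlgHom.commutes]
      exact continuous_const
  | grade1 x =>
      simp only [evalA_ι]
      have hV : Continuous fun V : ι → UN N => ((V x.1 : Mat N)) :=
        continuous_subtype_val.comp (continuous_apply x.1)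
      have : Continuous fun V : ι → UN N => star ((V x.1 : Mat N)) := by
        simp only [Matrix.star_eq_conjTranspose]
        exact hV.matrix_conjTranspose
      exact (hV.matrix_mul continuous_const).matrix_mul this
  | mul a b ha hb =>
      simp only [map_mul]
      exact ha.matrix_mul hb
  | add a b ha hb =>
      simp only [map_add]
      exact ha.add hb

lemma gibbsWt_continuous {ι : Type} [Fintype ι] {r : ι → ℕ} {N : ℕ}
    (h : FAlg (gen r)) (A : ∀ i, Fin (r i) → Mat N) :
    Continuous fun V : ι → UN N => gibbsWt h A V := by
  unfold gibbsWt trN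
  refine Real.continuous_exp.comp (continuous_const.mul ?_)
  exact Complex.continuous_re.comp (((eval_continuous A h).matrix_trace).div_const _)

lemma gibbsWt_le {ι : Type} [Fintype ι] {r : ι → ℕ} {N : ℕ} {R C : ℝ}
    (h : FAlg (gen r))
    (hCb : ∀ (N' : ℕ) (B : ∀ i, Fin (r i) → Mat N'),
      (∀ i j, opNorm (B i j) ≤ R) → opNorm (evalA B h) ≤ C)
    (A : ∀ i, Fin (r i) → Mat N) (hA : ∀ i j, opNorm (A i j) ≤ R) (V : ι → UN N) :
    gibbsWt h A V ≤ Real.exp ((N : ℝ) ^ 2 * C) := by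
  unfold gibbsWt
  apply Real.exp_le_exp.2
  have habs : |(trN N (evalA (conjFam V A) h)).re| ≤ C :=
    (Complex.abs_re_le_norm _).trans ((trN_abs_le _).trans
      (hCb N (conjFam V A) (conjFam_opNorm_le V A hA)))
  have := neg_le_of_abs_le habs
  calc -(N : ℝ) ^ 2 * (trN N (evalA (conjFam V A) h)).re
      = (N : ℝ) ^ 2 * (-(trN N (evalA (conjFam V A) h)).re) := by ring
    _ ≤ (N : ℝ) ^ 2 * C := by
        refine mul_le_mul_of_nonneg_left ?_ (sq_nonneg _)
        linarith [neg_le_of_abs_le habs]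

lemma gibbs_integral {ι : Type} [Fintype ι] {r : ι → ℕ}
    (γ : ∀ N, Measure (UN N)) [∀ N, IsProbabilityMeasure (γ N)] {R C : ℝ}
    (h : FAlg (gen r)) (hC : 0 ≤ C)
    (hCb : ∀ (N' : ℕ) (B : ∀ i, Fin (r i) → Mat N'),
      (∀ i j, opNorm (B i j) ≤ R) → opNorm (evalA B h) ≤ C)
    {N : ℕ} (A : ∀ i, Fin (r i) → Mat N) (hA : ∀ i j, opNorm (A i j) ≤ R) :
    (0 < ∫ V : ι → UN N, gibbsWt h A V ∂(Measure.pi fun _ => γ N)) ∧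
      Real.log (∫ V : ι → UN N, gibbsWt h A V ∂(Measure.pi fun _ => γ N)) ≤ (N : ℝ) ^ 2 * C := by
  have hb := gibbsWt_le h hCb A hA
  have hpos : ∀ V : ι → UN N, 0 < gibbsWt h A V := fun V => Real.exp_pos _
  have hmeas : Measurable fun V : ι → UN N => gibbsWt h A V :=
    (gibbsWt_continuous h A).measurable
  have hint : Integrable (fun V : ι → UN N => gibbsWt h A V) (Measure.pi fun _ => γ N) := by
    refine Integrable.mono' (integrable_const (Real.exp ((N : ℝ) ^ 2 * C)))
      hmeas.aestronglyMeasurable (Filter.Eventually.of_forall fun V => ?_)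
    rw [Real.norm_eq_abs, abs_of_pos (hpos V)]
    exact hb V
  have hI : 0 < ∫ V : ι → UN N, gibbsWt h A V ∂(Measure.pi fun _ => γ N) := by
    rw [integral_pos_iff_support_of_nonneg (fun V => (hpos V).le) hint]
    have hsupp : Function.support (fun V : ι → UN N => gibbsWt h A V) = Set.univ :=
      Set.eq_univ_of_forall fun V => (hpos V).ne'
    rw [hsupp]
    simp
  refine ⟨hI, ?_⟩
  rw [Real.log_le_iff_le_exp hI]
  calc ∫ V : ι → UN N, gibbsWt h A V ∂(Measure.pi fun _ => γ N)
      ≤ ∫ _V : ι → UN N, Real.exp ((N : ℝ) ^ 2 * C) ∂(Measure.pi fun _ => γ N) :=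
        integral_mono hint (integrable_const _) hb
    _ = Real.exp ((N : ℝ) ^ 2 * C) := by simp

end Aux2


section Aux3

/-! ### Sub-system compatibilities -/

lemma isSA_inclSub {ι : Type} [Fintype ι] {r : ι → ℕ} (P : ι → Prop) [DecidablePred P]
    {h : FAlg (gen fun i : Subtype P => r i.1)} (hs : IsSA h) : IsSA (inclSub (r := r) P h) := by
  unfold IsSA at hs ⊢
  have : inclSub (r := r) P =
      genMap (fun p : gen (fun i : Subtype P => r i.1) => (⟨p.1.1, p.2⟩ : gen r)) := rfl
  rw [this, fstar_genMap, hs]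

lemma evalA_inclSub {ι : Type} [Fintype ι] {r : ι → ℕ} (P : ι → Prop) [DecidablePred P]
    {N : ℕ} (B : ∀ i, Fin (r i) → Mat N) (p : FAlg (gen fun i : Subtype P => r i.1)) :
    evalA B (inclSub P p) = evalA (fun i : Subtype P => B i.1) p := by
  have key : (evalA B).comp (inclSub (r := r) P) = evalA (fun i : Subtype P => B i.1) := by
    apply FreeAlgebra.hom_ext
    funext x
    simp [inclSub, FreeAlgebra.lift_ι_apply]
  exact DFunLike.congr_fun key p

lemma restr_restrSub {ι : Type} [Fintype ι] {r : ι → ℕ} (P : ι → Prop) [DecidablePred P]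
    (τ : FAlg (gen r) →ₗ[ℂ] ℂ) (i : Subtype P) :
    restr (restrSub P τ) i = restr τ i.1 := by
  have key : (inclSub (r := r) P).comp (inclAlg (fun j : Subtype P => r j.1) i) =
      inclAlg r i.1 := by
    apply FreeAlgebra.hom_ext
    funext j
    simp [inclSub, inclAlg, FreeAlgebra.lift_ι_apply]
  unfold restr restrSub
  rw [LinearMap.comp_assoc, ← AlgHom.comp_toLinearMap, key]

lemma microSet_mono {κ : Type} (R : ℝ) (τ : FAlg κ →ₗ[ℂ] ℂ) (N : ℕ) {m m' : ℕ}
    (hm : m' ≤ m) {δ δ' : ℝ} (hδ : δ ≤ δ') :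
    microSet R τ N m δ ⊆ microSet R τ N m' δ' := by
  rintro A ⟨h1, h2⟩
  exact ⟨h1, fun w hw hl => lt_of_lt_of_le (h2 w hw (hl.trans hm)) hδ⟩

lemma microProd_norms {ι : Type} [Fintype ι] {r : ι → ℕ} {R : ℝ}
    {τs : ∀ i, FAlg (Fin (r i)) →ₗ[ℂ] ℂ} {N m : ℕ} {δ : ℝ} {A : ∀ i, Fin (r i) → Mat N}
    (hA : A ∈ microProd R τs N m δ) : ∀ i j, opNorm (A i j) ≤ R :=
  fun i j => ((hA i).1 j).2

/-! ### Bounds on the orbital free pressure -/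

lemma piOrbN_le_bound {ι : Type} [Fintype ι] {r : ι → ℕ}
    (γ : ∀ N, Measure (UN N)) [∀ N, IsProbabilityMeasure (γ N)] {R : ℝ}
    (h : FAlg (gen r)) (τs : ∀ i, FAlg (Fin (r i)) →ₗ[ℂ] ℂ) (N m : ℕ) (δ : ℝ)
    {C : ℝ} (hC : 0 ≤ C)
    (hCb : ∀ (N' : ℕ) (B : ∀ i, Fin (r i) → Mat N'),
      (∀ i j, opNorm (B i j) ≤ R) → opNorm (evalA B h) ≤ C) :
    piOrbN γ R h τs N m δ ≤ (((N : ℝ) ^ 2 * C : ℝ) : EReal) := by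
  rw [piOrbN]
  refine iSup₂_le fun A hA => ?_
  exact EReal.coe_le_coe_iff.2 ((gibbs_integral γ h hC hCb A (microProd_norms hA)).2)

lemma limsup_piOrbN_le {ι : Type} [Fintype ι] {r : ι → ℕ}
    (γ : ∀ N, Measure (UN N)) [∀ N, IsProbabilityMeasure (γ N)] {R : ℝ}
    (h : FAlg (gen r)) (τs : ∀ i, FAlg (Fin (r i)) →ₗ[ℂ] ℂ) (m : ℕ) (δ : ℝ)
    {C : ℝ} (hC : 0 ≤ C)
    (hCb : ∀ (N' : ℕ) (B : ∀ i, Fin (r i) → Mat N'),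
      (∀ i j, opNorm (B i j) ≤ R) → opNorm (evalA B h) ≤ C) :
    Filter.limsup
      (fun N : ℕ => ((((N : ℝ) ^ 2)⁻¹ : ℝ) : EReal) * piOrbN γ R h τs N m δ)
      Filter.atTop ≤ (C : EReal) := by
  refine Filter.limsup_le_of_le (by isBoundedDefault) (Filter.Eventually.of_forall fun N => ?_)
  calc ((((N : ℝ) ^ 2)⁻¹ : ℝ) : EReal) * piOrbN γ R h τs N m δ
      ≤ ((((N : ℝ) ^ 2)⁻¹ : ℝ) : EReal) * (((N : ℝ) ^ 2 * C : ℝ) : EReal) :=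
        mul_le_mul_of_nonneg_left (piOrbN_le_bound γ h τs N m δ hC hCb)
          (by exact_mod_cast inv_nonneg.2 (sq_nonneg (N : ℝ)))
    _ = ((((N : ℝ) ^ 2)⁻¹ * ((N : ℝ) ^ 2 * C) : ℝ) : EReal) := (EReal.coe_mul _ _).symm
    _ ≤ (C : EReal) := by
        apply EReal.coe_le_coe_iff.2
        rcases Nat.eq_zero_or_pos N with h0 | h0
        · subst h0; simpa using hC
        · have hne : ((N : ℝ) ^ 2) ≠ 0 := by positivity
          rw [inv_mul_cancel_left₀ hne]

lemma piOrb_le_bound {ι : Type} [Fintype ι] {r : ι → ℕ}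
    (γ : ∀ N, Measure (UN N)) [∀ N, IsProbabilityMeasure (γ N)] {R : ℝ}
    (h : FAlg (gen r)) (τs : ∀ i, FAlg (Fin (r i)) →ₗ[ℂ] ℂ)
    {C : ℝ} (hC : 0 ≤ C)
    (hCb : ∀ (N' : ℕ) (B : ∀ i, Fin (r i) → Mat N'),
      (∀ i j, opNorm (B i j) ≤ R) → opNorm (evalA B h) ≤ C) :
    piOrb γ R h τs ≤ (C : EReal) := by
  rw [piOrb]
  exact iInf_le_of_le 0 (iInf_le_of_le 1 (iInf_le_of_le one_pos
    (limsup_piOrbN_le γ h τs 0 1 hC hCb)))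

/-! ### Splitting the integral over two sub-systems -/

lemma integral_split {ι : Type} [Fintype ι] (P Q : ι → Prop) [DecidablePred P]
    [DecidablePred Q] (hPQ : ∀ i, Q i ↔ ¬ P i) {X : Type} [MeasurableSpace X]
    (μ : Measure X) [IsProbabilityMeasure μ]
    (F : (Subtype P → X) → ℝ) (G : (Subtype Q → X) → ℝ) :
    ∫ V : ι → X, F (fun i => V i.1) * G (fun j => V j.1) ∂(Measure.pi fun _ => μ) =
      (∫ x : Subtype P → X, F x ∂(Measure.pi fun _ => μ)) *
        ∫ y : Subtype Q → X, G y ∂(Measure.pi fun _ => μ) := by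
  classical
  set e' : {i // ¬ P i} ≃ Subtype Q := Equiv.subtypeEquivRight fun i => (hPQ i).symm with he'
  have mp2 : MeasurePreserving (MeasurableEquiv.piCongrLeft (fun _ : Subtype Q => X) e')
      (Measure.pi fun _ : {i // ¬ P i} => μ) (Measure.pi fun _ : Subtype Q => μ) :=
    measurePreserving_piCongrLeft (fun _ : Subtype Q => μ) e'
  have mp1 := measurePreserving_piEquivPiSubtypeProd (fun _ : ι => μ) P
  have mpPair := (MeasurePreserving.id (Measure.pi fun _ : Subtype P => μ)).prod mp2
  set Φ := (MeasurableEquiv.piEquivPiSubtypeProd (fun _ : ι => X) P).trans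
      ((MeasurableEquiv.refl (Subtype P → X)).prodCongr
        (MeasurableEquiv.piCongrLeft (fun _ : Subtype Q => X) e')) with hΦ
  have mpΦ : MeasurePreserving (⇑Φ) (Measure.pi fun _ : ι => μ)
      ((Measure.pi fun _ : Subtype P => μ).prod (Measure.pi fun _ : Subtype Q => μ)) := by
    have h2 := mpPair.comp mp1
    have hfun : ⇑Φ = (Prod.map (fun x : Subtype P → X => x)
        (⇑(MeasurableEquiv.piCongrLeft (fun _ : Subtype Q => X) e'))) ∘
          ⇑(MeasurableEquiv.piEquivPiSubtypeProd (fun _ : ι => X) P) := rfl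
    rw [hfun]
    exact h2
  have key := mpΦ.integral_comp Φ.measurableEmbedding
    (fun z : (Subtype P → X) × (Subtype Q → X) => F z.1 * G z.2)
  calc ∫ V : ι → X, F (fun i => V i.1) * G (fun j => V j.1) ∂(Measure.pi fun _ => μ)
      = ∫ V : ι → X, (fun z : (Subtype P → X) × (Subtype Q → X) => F z.1 * G z.2) (Φ V)
          ∂(Measure.pi fun _ => μ) := by
        refine integral_congr_ae (Filter.Eventually.of_forall fun V => ?_)
        have h2 : (Φ V).2 = fun j : Subtype Q => V j.1 := by
          funext j
          show (Equiv.piCongrLeft (fun _ : Subtype Q => X) e')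
            (fun i : {i // ¬ P i} => V i.1) j = V j.1
          conv_lhs => rw [← e'.apply_symm_apply j]
          rw [Equiv.piCongrLeft_apply_apply]
          simp [he', Equiv.subtypeEquivRight]
          rfl
        show F (fun i => V i.1) * G (fun j => V j.1) = F (Φ V).1 * G (Φ V).2
        rw [h2]
        rfl
    _ = ∫ z : (Subtype P → X) × (Subtype Q → X), F z.1 * G z.2
          ∂((Measure.pi fun _ : Subtype P => μ).prod (Measure.pi fun _ : Subtype Q => μ)) := key
    _ = (∫ x : Subtype P → X, F x ∂(Measure.pi fun _ => μ)) *
          ∫ y : Subtype Q → X, G y ∂(Measure.pi fun _ => μ) :=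
        MeasureTheory.integral_prod_mul F G

lemma trN_add {N : ℕ} (X Y : Mat N) : trN N (X + Y) = trN N X + trN N Y := by
  rw [trN, trN, trN, Matrix.trace_add, add_div]

lemma gibbsWt_split {ι : Type} [Fintype ι] {r : ι → ℕ} (P Q : ι → Prop)
    [DecidablePred P] [DecidablePred Q] {N : ℕ}
    (h₁ : FAlg (gen fun i : Subtype P => r i.1)) (h₂ : FAlg (gen fun i : Subtype Q => r i.1))
    (A : ∀ i, Fin (r i) → Mat N) (V : ι → UN N) :
    gibbsWt (inclSub P h₁ + inclSub Q h₂) A V =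
      gibbsWt h₁ (fun i : Subtype P => A i.1) (fun i : Subtype P => V i.1) *
        gibbsWt h₂ (fun j : Subtype Q => A j.1) (fun j : Subtype Q => V j.1) := by
  unfold gibbsWt
  rw [← Real.exp_add]
  congr 1
  have e1 : evalA (conjFam V A) (inclSub P h₁ + inclSub Q h₂) =
      evalA (conjFam (fun i : Subtype P => V i.1) (fun i : Subtype P => A i.1)) h₁ +
        evalA (conjFam (fun j : Subtype Q => V j.1) (fun j : Subtype Q => A j.1)) h₂ := by
    rw [map_add, evalA_inclSub, evalA_inclSub]
    rfl
  rw [e1, trN_add, Complex.add_re]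
  ring

end Aux3


section Aux4

variable {ι : Type} [Fintype ι] {r : ι → ℕ}
variable (γ : ∀ N, Measure (UN N)) [∀ N, IsProbabilityMeasure (γ N)] {R : ℝ}
variable (P Q : ι → Prop) [DecidablePred P] [DecidablePred Q]

lemma piOrbN_split (hPQ : ∀ i, Q i ↔ ¬ P i) (τ : FAlg (gen r) →ₗ[ℂ] ℂ)
    (h₁ : FAlg (gen fun i : Subtype P => r i.1)) (h₂ : FAlg (gen fun i : Subtype Q => r i.1))
    {C₁ C₂ : ℝ} (hC₁ : 0 ≤ C₁) (hC₂ : 0 ≤ C₂)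
    (hCb₁ : ∀ (N' : ℕ) (B : ∀ i : Subtype P, Fin (r i.1) → Mat N'),
      (∀ i j, opNorm (B i j) ≤ R) → opNorm (evalA B h₁) ≤ C₁)
    (hCb₂ : ∀ (N' : ℕ) (B : ∀ i : Subtype Q, Fin (r i.1) → Mat N'),
      (∀ i j, opNorm (B i j) ≤ R) → opNorm (evalA B h₂) ≤ C₂)
    (N m₁ m₂ : ℕ) (δ₁ δ₂ : ℝ) :
    piOrbN γ R (inclSub P h₁ + inclSub Q h₂) (restr τ) N (max m₁ m₂) (min δ₁ δ₂) ≤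
      piOrbN γ R h₁ (restr (restrSub P τ)) N m₁ δ₁ +
        piOrbN γ R h₂ (restr (restrSub Q τ)) N m₂ δ₂ := by
  simp only [piOrbN]
  refine iSup₂_le fun A hA => ?_
  have hA₁ : (fun i : Subtype P => A i.1) ∈ microProd R (restr (restrSub P τ)) N m₁ δ₁ := by
    intro i
    rw [restr_restrSub]
    exact microSet_mono R _ N (le_max_left _ _) (min_le_left _ _) (hA i.1)
  have hA₂ : (fun j : Subtype Q => A j.1) ∈ microProd R (restr (restrSub Q τ)) N m₂ δ₂ := by
    intro j
    rw [restr_restrSub]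
    exact microSet_mono R _ N (le_max_right _ _) (min_le_right _ _) (hA j.1)
  have p1 := gibbs_integral γ h₁ hC₁ hCb₁ (fun i : Subtype P => A i.1)
    (fun i j => microProd_norms hA i.1 j)
  have p2 := gibbs_integral γ h₂ hC₂ hCb₂ (fun j : Subtype Q => A j.1)
    (fun j k => microProd_norms hA j.1 k)
  have hsplit : (∫ V : ι → UN N, gibbsWt (inclSub P h₁ + inclSub Q h₂) A V
        ∂(Measure.pi fun _ => γ N)) =
      (∫ x : Subtype P → UN N, gibbsWt h₁ (fun i : Subtype P => A i.1) x
        ∂(Measure.pi fun _ => γ N)) *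
        ∫ y : Subtype Q → UN N, gibbsWt h₂ (fun j : Subtype Q => A j.1) y
          ∂(Measure.pi fun _ => γ N) := by
    rw [show (fun V : ι → UN N => gibbsWt (inclSub P h₁ + inclSub Q h₂) A V) =
        (fun V : ι → UN N =>
          gibbsWt h₁ (fun i : Subtype P => A i.1) (fun i : Subtype P => V i.1) *
            gibbsWt h₂ (fun j : Subtype Q => A j.1) (fun j : Subtype Q => V j.1)) from
      funext fun V => gibbsWt_split P Q h₁ h₂ A V]
    exact integral_split P Q hPQ (γ N) _ _
  calc ((Real.log (∫ V : ι → UN N, gibbsWt (inclSub P h₁ + inclSub Q h₂) A V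
          ∂(Measure.pi fun _ => γ N)) : ℝ) : EReal)
      = ((Real.log (∫ x : Subtype P → UN N, gibbsWt h₁ (fun i : Subtype P => A i.1) x
            ∂(Measure.pi fun _ => γ N)) : ℝ) : EReal) +
          ((Real.log (∫ y : Subtype Q → UN N, gibbsWt h₂ (fun j : Subtype Q => A j.1) y
            ∂(Measure.pi fun _ => γ N)) : ℝ) : EReal) := by
        rw [hsplit, Real.log_mul p1.1.ne' p2.1.ne', EReal.coe_add]
    _ ≤ _ + _ :=
        add_le_add (le_iSup₂_of_le _ hA₁ le_rfl) (le_iSup₂_of_le _ hA₂ le_rfl)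

lemma piOrb_split (hR : 0 ≤ R) (hPQ : ∀ i, Q i ↔ ¬ P i) (τ : FAlg (gen r) →ₗ[ℂ] ℂ)
    (h₁ : FAlg (gen fun i : Subtype P => r i.1)) (h₂ : FAlg (gen fun i : Subtype Q => r i.1)) :
    piOrb γ R (inclSub P h₁ + inclSub Q h₂) (restr τ) ≤
      piOrb γ R h₁ (restr (restrSub P τ)) + piOrb γ R h₂ (restr (restrSub Q τ)) := by
  obtain ⟨C₁, hC₁, hCb₁⟩ := eval_bound hR h₁
  obtain ⟨C₂, hC₂, hCb₂⟩ := eval_bound hR h₂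
  haveI : Nonempty {q : ℕ × ℝ // 0 < q.2} := ⟨⟨(0, 1), one_pos⟩⟩
  simp only [piOrb]
  rw [ereal_iInf_sigma, ereal_iInf_sigma, ereal_iInf_sigma]
  refine ereal_le_add_iInf _ _ ?_ ?_ ?_
  · intro q
    exact ne_top_of_le_ne_top (EReal.coe_ne_top C₁)
      (limsup_piOrbN_le γ h₁ _ q.1.1 q.1.2 hC₁ hCb₁)
  · intro q
    exact ne_top_of_le_ne_top (EReal.coe_ne_top C₂)
      (limsup_piOrbN_le γ h₂ _ q.1.1 q.1.2 hC₂ hCb₂)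
  · intro q₁ q₂
    set u := fun N : ℕ => ((((N : ℝ) ^ 2)⁻¹ : ℝ) : EReal) *
      piOrbN γ R h₁ (restr (restrSub P τ)) N q₁.1.1 q₁.1.2 with hu
    set v := fun N : ℕ => ((((N : ℝ) ^ 2)⁻¹ : ℝ) : EReal) *
      piOrbN γ R h₂ (restr (restrSub Q τ)) N q₂.1.1 q₂.1.2 with hv
    have hul : Filter.limsup u Filter.atTop ≤ (C₁ : EReal) :=
      limsup_piOrbN_le γ h₁ _ q₁.1.1 q₁.1.2 hC₁ hCb₁
    have hvl : Filter.limsup v Filter.atTop ≤ (C₂ : EReal) :=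
      limsup_piOrbN_le γ h₂ _ q₂.1.1 q₂.1.2 hC₂ hCb₂
    refine le_trans (iInf_le_of_le
      ⟨(max q₁.1.1 q₂.1.1, min q₁.1.2 q₂.1.2), lt_min q₁.2 q₂.2⟩ le_rfl) ?_
    have hpoint : ∀ N : ℕ,
        ((((N : ℝ) ^ 2)⁻¹ : ℝ) : EReal) *
          piOrbN γ R (inclSub P h₁ + inclSub Q h₂) (restr τ) N
            (max q₁.1.1 q₂.1.1) (min q₁.1.2 q₂.1.2) ≤ (u + v) N := by
      intro N
      have h12 := piOrbN_split γ P Q hPQ τ h₁ h₂ hC₁ hC₂ hCb₁ hCb₂ N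
        q₁.1.1 q₂.1.1 q₁.1.2 q₂.1.2
      have hne₁ : piOrbN γ R h₁ (restr (restrSub P τ)) N q₁.1.1 q₁.1.2 ≠ ⊤ :=
        ne_top_of_le_ne_top (EReal.coe_ne_top _)
          (piOrbN_le_bound γ h₁ _ N q₁.1.1 q₁.1.2 hC₁ hCb₁)
      have hne₂ : piOrbN γ R h₂ (restr (restrSub Q τ)) N q₂.1.1 q₂.1.2 ≠ ⊤ :=
        ne_top_of_le_ne_top (EReal.coe_ne_top _)
          (piOrbN_le_bound γ h₂ _ N q₂.1.1 q₂.1.2 hC₂ hCb₂)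
      have hcn : (0 : ℝ) ≤ (((N : ℝ) ^ 2)⁻¹ : ℝ) := inv_nonneg.2 (sq_nonneg _)
      calc ((((N : ℝ) ^ 2)⁻¹ : ℝ) : EReal) *
            piOrbN γ R (inclSub P h₁ + inclSub Q h₂) (restr τ) N
              (max q₁.1.1 q₂.1.1) (min q₁.1.2 q₂.1.2)
          ≤ ((((N : ℝ) ^ 2)⁻¹ : ℝ) : EReal) *
              (piOrbN γ R h₁ (restr (restrSub P τ)) N q₁.1.1 q₁.1.2 +
                piOrbN γ R h₂ (restr (restrSub Q τ)) N q₂.1.1 q₂.1.2) :=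
            mul_le_mul_of_nonneg_left h12 (by exact_mod_cast hcn)
        _ = u N + v N := ereal_distrib _ hcn hne₁ hne₂
        _ = (u + v) N := rfl
    calc Filter.limsup (fun N : ℕ => ((((N : ℝ) ^ 2)⁻¹ : ℝ) : EReal) *
            piOrbN γ R (inclSub P h₁ + inclSub Q h₂) (restr τ) N
              (max q₁.1.1 q₂.1.1) (min q₁.1.2 q₂.1.2)) Filter.atTop
        ≤ Filter.limsup (u + v) Filter.atTop :=
          Filter.limsup_le_limsup (Filter.Eventually.of_forall hpoint)
      _ ≤ Filter.limsup u Filter.atTop + Filter.limsup v Filter.atTop :=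
          EReal.limsup_add_le
            (Or.inr (ne_top_of_le_ne_top (EReal.coe_ne_top _) hvl))
            (Or.inl (ne_top_of_le_ne_top (EReal.coe_ne_top _) hul))
      _ ≤ _ + _ := le_rfl

lemma etaOrb_split (hR : 0 ≤ R) (hPQ : ∀ i, Q i ↔ ¬ P i) (τ : FAlg (gen r) →ₗ[ℂ] ℂ) :
    etaOrb γ R τ ≤ etaOrb γ R (restrSub P τ) + etaOrb γ R (restrSub Q τ) := by
  haveI : Nonempty {h : FAlg (gen fun i : Subtype P => r i.1) // IsSA h} := ⟨⟨0, isSA_zero⟩⟩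
  haveI : Nonempty {h : FAlg (gen fun i : Subtype Q => r i.1) // IsSA h} := ⟨⟨0, isSA_zero⟩⟩
  simp only [etaOrb, etaOrbRel]
  rw [iInf_subtype', iInf_subtype', iInf_subtype']
  refine ereal_le_add_iInf _ _ ?_ ?_ ?_
  · intro s
    obtain ⟨C, hC0, hCb⟩ := eval_bound hR s.1
    have hle : ((((restrSub P τ) s.1).re : ℝ) : EReal) + piOrb γ R s.1 (restr (restrSub P τ)) ≤
        (((((restrSub P τ) s.1).re + C : ℝ)) : EReal) := by
      rw [EReal.coe_add]
      exact add_le_add_right (piOrb_le_bound γ s.1 _ hC0 hCb) _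
    exact ne_top_of_le_ne_top (EReal.coe_ne_top _) hle
  · intro s
    obtain ⟨C, hC0, hCb⟩ := eval_bound hR s.1
    have hle : ((((restrSub Q τ) s.1).re : ℝ) : EReal) + piOrb γ R s.1 (restr (restrSub Q τ)) ≤
        (((((restrSub Q τ) s.1).re + C : ℝ)) : EReal) := by
      rw [EReal.coe_add]
      exact add_le_add_right (piOrb_le_bound γ s.1 _ hC0 hCb) _
    exact ne_top_of_le_ne_top (EReal.coe_ne_top _) hle
  · intro s₁ s₂
    have hSA : IsSA (inclSub P s₁.1 + inclSub Q s₂.1) := by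
      have e₁ := isSA_inclSub (r := r) P s₁.2
      have e₂ := isSA_inclSub (r := r) Q s₂.2
      unfold IsSA at e₁ e₂ ⊢
      rw [fstar_add, e₁, e₂]
    refine le_trans (iInf_le_of_le ⟨inclSub P s₁.1 + inclSub Q s₂.1, hSA⟩ le_rfl) ?_
    have hre : (τ (inclSub P s₁.1 + inclSub Q s₂.1)).re =
        ((restrSub P τ) s₁.1).re + ((restrSub Q τ) s₂.1).re := by
      rw [map_add, Complex.add_re]
      rfl
    rw [hre, EReal.coe_add]
    have hπ := piOrb_split γ P Q hR hPQ τ s₁.1 s₂.1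
    calc ((((restrSub P τ) s₁.1).re : ℝ) : EReal) + ((((restrSub Q τ) s₂.1).re : ℝ) : EReal) +
          piOrb γ R (inclSub P s₁.1 + inclSub Q s₂.1) (restr τ)
        ≤ ((((restrSub P τ) s₁.1).re : ℝ) : EReal) + ((((restrSub Q τ) s₂.1).re : ℝ) : EReal) +
            (piOrb γ R s₁.1 (restr (restrSub P τ)) + piOrb γ R s₂.1 (restr (restrSub Q τ))) :=
          add_le_add_right hπ _
      _ = (((((restrSub P τ) s₁.1).re : ℝ) : EReal) + piOrb γ R s₁.1 (restr (restrSub P τ))) +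
            (((((restrSub Q τ) s₂.1).re : ℝ) : EReal) + piOrb γ R s₂.1 (restr (restrSub Q τ))) :=
          add_add_add_comm _ _ _ _

end Aux4

/-- Proposition 3.3 (3): subadditivity of the orbital `η`-entropy
with respect to splitting the variables into two sub-systems. -/
theorem statement7 {n : ℕ} (hn : 1 ≤ n) (r : Fin n → ℕ) (hr : ∀ i, 1 ≤ r i) (R : ℝ) (hR : 0 < R)
    (γ : ∀ N, Measure (UN N)) [∀ N, IsProbabilityMeasure (γ N)]
    (hγ : ∀ N, (γ N).IsMulLeftInvariant)
    (τ : FAlg (gen r) →ₗ[ℂ] ℂ) (hτ : IsHermState τ)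
    (n' : ℕ) (hn'1 : 1 ≤ n') (hn' : n' < n) :
    etaOrb γ R τ ≤
      etaOrb γ R (restrSub (fun i : Fin n => (i : ℕ) < n') τ) +
        etaOrb γ R (restrSub (fun i : Fin n => n' ≤ (i : ℕ)) τ) :=
  etaOrb_split γ (fun i : Fin n => (i : ℕ) < n') (fun i : Fin n => n' ≤ (i : ℕ))
    hR.le (fun i => not_lt.symm) τ

end OrbFP

end
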